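/- There exists a universal constant C > 0 (one may take C = 4√2) with the following property. Let T be a nonempty finite set, m ∈ ℕ, a : T → ℝ^m, let X be a standard Gaussian random vector in ℝ^m, and set Ψ_t := ⟨a_t, X⟩ for t ∈ T (a centered jointly Gaussian family). Define the canonical pseudometric ρ(s,t) := ‖a_s − a_t‖₂ = √(E(Ψ_s − Ψ_t)²), and for r > 0 let N(r) be the minimal cardinality of a subset S ⊆ T such that every t ∈ T satisfies ρ(t,s) ≤ r for some s ∈ S. Then E[ max_{t∈T} Ψ_t ] ≤ C · ∫₀^∞ √( log N(r) ) dr. -/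

import Mathlib

open MeasureTheory ProbabilityTheory Real
open scoped ENNReal NNReal
set_option maxHeartbeats 1000000
set_option linter.unusedSectionVars false

lemma gpdf_shift (c x : ℝ) :
    gaussianPDFReal 0 1 x * rexp (c * x) = rexp (c ^ 2 / 2) * gaussianPDFReal c 1 x := by
  simp only [gaussianPDFReal, NNReal.coe_one, mul_one, sub_zero, mul_assoc, ← Real.exp_add]
  rw [mul_comm (rexp _), mul_assoc, ← Real.exp_add]
  congr 2
  ring

lemma mgf1d_int (c : ℝ) : Integrable (fun x => rexp (c * x)) (gaussianReal 0 1) := by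
  rw [gaussianReal_of_var_ne_zero 0 one_ne_zero, gaussianPDF_def]
  have hm : Measurable fun x => Real.toNNReal (gaussianPDFReal 0 1 x) :=
    (measurable_gaussianPDFReal 0 1).real_toNNReal
  rw [show (fun x => ENNReal.ofReal (gaussianPDFReal 0 1 x))
      = (fun x => ((Real.toNNReal (gaussianPDFReal 0 1 x) : ℝ≥0) : ℝ≥0∞)) from rfl,
    integrable_withDensity_iff_integrable_smul hm]
  have : (fun x => (Real.toNNReal (gaussianPDFReal 0 1 x)) • rexp (c * x))
      = fun x => rexp (c ^ 2 / 2) * gaussianPDFReal c 1 x := by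
    ext x
    rw [NNReal.smul_def, smul_eq_mul, Real.coe_toNNReal _ (gaussianPDFReal_nonneg 0 1 x),
      gpdf_shift]
  rw [this]
  exact (integrable_gaussianPDFReal c 1).const_mul _

lemma mgf1d (c : ℝ) : ∫ x, rexp (c * x) ∂(gaussianReal 0 1) = rexp (c ^ 2 / 2) := by
  rw [gaussianReal_of_var_ne_zero 0 one_ne_zero, gaussianPDF_def]
  have hm : Measurable fun x => Real.toNNReal (gaussianPDFReal 0 1 x) :=
    (measurable_gaussianPDFReal 0 1).real_toNNReal
  rw [show (fun x => ENNReal.ofReal (gaussianPDFReal 0 1 x))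
      = (fun x => ((Real.toNNReal (gaussianPDFReal 0 1 x) : ℝ≥0) : ℝ≥0∞)) from rfl,
    integral_withDensity_eq_integral_smul hm]
  have : (fun x => (Real.toNNReal (gaussianPDFReal 0 1 x)) • rexp (c * x))
      = fun x => rexp (c ^ 2 / 2) * gaussianPDFReal c 1 x := by
    ext x
    rw [NNReal.smul_def, smul_eq_mul, Real.coe_toNNReal _ (gaussianPDFReal_nonneg 0 1 x),
      gpdf_shift]
  rw [this, integral_const_mul, integral_gaussianPDFReal_eq_one c one_ne_zero, mul_one]

noncomputable def μpi (m : ℕ) : Measure (Fin m → ℝ) := Measure.pi fun _ => gaussianReal 0 1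

instance (m : ℕ) : IsProbabilityMeasure (μpi m) := by unfold μpi; infer_instance

lemma pi_prod_int (m : ℕ) (f : Fin m → ℝ → ℝ)
    (hf : ∀ i, Integrable (f i) (gaussianReal 0 1)) :
    Integrable (fun z : Fin m → ℝ => ∏ i, f i (z i)) (μpi m) := by
  letI : MeasureSpace ℝ := ⟨gaussianReal 0 1⟩
  haveI : SigmaFinite (volume : Measure ℝ) :=
    inferInstanceAs (SigmaFinite (gaussianReal 0 1))
  have h1 : μpi m = (volume : Measure (Fin m → ℝ)) := by rw [volume_pi]; rfl
  rw [h1]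
  exact MeasureTheory.Integrable.fin_nat_prod hf

lemma pi_prod_integral (m : ℕ) (f : Fin m → ℝ → ℝ) :
    ∫ z : Fin m → ℝ, ∏ i, f i (z i) ∂(μpi m) = ∏ i, ∫ x, f i x ∂(gaussianReal 0 1) := by
  letI : MeasureSpace ℝ := ⟨gaussianReal 0 1⟩
  have h1 : μpi m = (volume : Measure (Fin m → ℝ)) := by rw [volume_pi]; rfl
  haveI : SigmaFinite (volume : Measure ℝ) :=
    inferInstanceAs (SigmaFinite (gaussianReal 0 1))
  rw [h1, show gaussianReal 0 1 = (volume : Measure ℝ) from rfl]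
  exact MeasureTheory.integral_fin_nat_prod_eq_prod f

section Psi
variable {m : ℕ}

def Ψ (a : EuclideanSpace ℝ (Fin m)) (z : Fin m → ℝ) : ℝ := ∑ i, a i * z i

lemma psi_meas (a : EuclideanSpace ℝ (Fin m)) : Measurable (Ψ a) := by
  apply Finset.measurable_sum
  exact fun i _ => (measurable_pi_apply i).const_mul _

lemma psi_neg (a : EuclideanSpace ℝ (Fin m)) (z : Fin m → ℝ) : Ψ a (-z) = -Ψ a z := by
  simp [Ψ, Finset.sum_neg_distrib]

lemma norm_sq_eq (a : EuclideanSpace ℝ (Fin m)) : ‖a‖ ^ 2 = ∑ i, a i ^ 2 := by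
  rw [EuclideanSpace.norm_eq, Real.sq_sqrt (by positivity)]
  simp [Real.norm_eq_abs, sq_abs]

lemma exp_psi_int (a : EuclideanSpace ℝ (Fin m)) :
    Integrable (fun z => rexp (Ψ a z)) (μpi m) := by
  have : (fun z : Fin m → ℝ => rexp (Ψ a z)) = fun z => ∏ i, rexp (a i * z i) := by
    ext z; rw [Ψ, Real.exp_sum]
  rw [this]
  exact pi_prod_int m _ fun i => mgf1d_int (a i)

lemma mgf_psi (a : EuclideanSpace ℝ (Fin m)) :
    ∫ z, rexp (Ψ a z) ∂(μpi m) = rexp (‖a‖ ^ 2 / 2) := by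
  have : (fun z : Fin m → ℝ => rexp (Ψ a z)) = fun z => ∏ i, rexp (a i * z i) := by
    ext z; rw [Ψ, Real.exp_sum]
  rw [this, pi_prod_integral m fun i x => rexp (a i * x)]
  simp_rw [mgf1d, ← Real.exp_sum, norm_sq_eq, Finset.sum_div]

lemma psi_int (a : EuclideanSpace ℝ (Fin m)) : Integrable (Ψ a) (μpi m) := by
  refine Integrable.mono ((exp_psi_int a).add (exp_psi_int (-a))) (psi_meas a).aestronglyMeasurable
    (Filter.Eventually.of_forall fun z => ?_)
  simp only [Pi.add_apply]
  have h1 : Ψ (-a) z = -Ψ a z := by simp [Ψ, Finset.sum_neg_distrib]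
  rw [Real.norm_eq_abs, Real.norm_eq_abs, h1]
  have h2 : |Ψ a z| ≤ rexp (Ψ a z) + rexp (-Ψ a z) := by
    rcases abs_cases (Ψ a z) with ⟨h, _⟩ | ⟨h, _⟩ <;> rw [h] <;>
      nlinarith [Real.add_one_le_exp (Ψ a z), Real.add_one_le_exp (-Ψ a z),
        Real.exp_pos (Ψ a z), Real.exp_pos (-Ψ a z)]
  calc |Ψ a z| ≤ rexp (Ψ a z) + rexp (-Ψ a z) := h2
    _ ≤ |rexp (Ψ a z) + rexp (-Ψ a z)| := le_abs_self _

lemma neg_preserving : MeasurePreserving (fun z : Fin m → ℝ => -z) (μpi m) (μpi m) := by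
  have h1 : (gaussianReal 0 1).map (fun x : ℝ => -x) = gaussianReal 0 1 := by
    have := gaussianReal_map_const_mul (μ := 0) (v := 1) (-1)
    simpa [neg_one_mul] using this
  have := MeasureTheory.measurePreserving_pi (fun _ : Fin m => gaussianReal 0 1)
    (fun _ : Fin m => gaussianReal 0 1) (f := fun _ (x : ℝ) => -x)
    (fun i => ⟨measurable_neg, h1⟩)
  exact this

lemma psi_mean_zero (a : EuclideanSpace ℝ (Fin m)) : ∫ z, Ψ a z ∂(μpi m) = 0 := by
  have h := neg_preserving (m := m)
  have h2 : ∫ z, Ψ a z ∂(μpi m) = ∫ z, Ψ a (-z) ∂(μpi m) := by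
    conv_lhs => rw [← h.map_eq]
    rw [integral_map h.aemeasurable (psi_meas a).aestronglyMeasurable.aemeasurable.aestronglyMeasurable]
  simp_rw [psi_neg] at h2
  rw [integral_neg] at h2
  linarith

lemma psi_smul (c : ℝ) (a : EuclideanSpace ℝ (Fin m)) (z : Fin m → ℝ) :
    Ψ (c • a) z = c * Ψ a z := by
  simp [Ψ, Finset.mul_sum]; congr 1; ext i; ring

lemma sup_meas {T : Type} (s : Finset T) (hs : s.Nonempty) (a : T → EuclideanSpace ℝ (Fin m)) :
    Measurable (fun z => s.sup' hs (fun t => Ψ (a t) z)) := by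
  have : (fun z => s.sup' hs (fun t => Ψ (a t) z)) = s.sup' hs (fun t => Ψ (a t)) := by
    ext z; rw [Finset.sup'_apply]
  rw [this]
  exact Finset.measurable_sup' hs fun t _ => psi_meas (a t)

lemma sup_int {T : Type} (s : Finset T) (hs : s.Nonempty) (a : T → EuclideanSpace ℝ (Fin m)) :
    Integrable (fun z => s.sup' hs (fun t => Ψ (a t) z)) (μpi m) := by
  refine Integrable.mono (integrable_finset_sum s (fun t _ => (psi_int (a t)).abs))
    (sup_meas s hs a).aestronglyMeasurable (Filter.Eventually.of_forall fun z => ?_)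
  obtain ⟨t, ht, h⟩ := Finset.exists_mem_eq_sup' hs (fun t => Ψ (a t) z)
  rw [Real.norm_eq_abs, h]
  refine le_trans ?_ (le_abs_self _)
  exact Finset.single_le_sum (f := fun u => |Ψ (a u) z|) (fun u _ => abs_nonneg _) ht

lemma gaussian_max (T : Type) (s : Finset T) (hs : s.Nonempty)
    (a : T → EuclideanSpace ℝ (Fin m)) (σ : ℝ) (hσ : 0 ≤ σ) (hb : ∀ t ∈ s, ‖a t‖ ≤ σ) :
    ∫ z, s.sup' hs (fun t => Ψ (a t) z) ∂(μpi m)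
      ≤ σ * Real.sqrt (2 * Real.log s.card) := by
  rcases eq_or_lt_of_le hσ with hσ0 | hσpos
  · -- σ = 0 : all a t = 0
    have hz : ∀ t ∈ s, a t = 0 := fun t ht =>
      norm_le_zero_iff.mp (by rw [hσ0]; exact hb t ht)
    have : ∀ z, s.sup' hs (fun t => Ψ (a t) z) = 0 := by
      intro z
      have : ∀ t ∈ s, Ψ (a t) z = 0 := fun t ht => by simp [hz t ht, Ψ]
      obtain ⟨t, ht, h⟩ := Finset.exists_mem_eq_sup' hs (fun t => Ψ (a t) z)
      rw [h, this t ht]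
    simp only [this, integral_zero]
    positivity
  rcases eq_or_lt_of_le (show 1 ≤ s.card from hs.card_pos) with h1 | hn2
  · -- card = 1
    obtain ⟨t, hst⟩ := Finset.card_eq_one.mp h1.symm
    subst hst
    simp only [Finset.sup'_singleton, Finset.card_singleton, Nat.cast_one, Real.log_one,
      mul_zero, Real.sqrt_zero]
    rw [psi_mean_zero]
  -- main case : card ≥ 2, σ > 0
  have hn : (2 : ℝ) ≤ s.card := by exact_mod_cast hn2
  have hL : 0 < Real.log s.card := Real.log_pos (by linarith)
  set L := Real.log s.card with hLdef
  set u := Real.sqrt (2 * L) with hu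
  have hu2 : u ^ 2 = 2 * L := Real.sq_sqrt (by positivity)
  have hupos : 0 < u := Real.sqrt_pos.mpr (by positivity)
  set lam := u / σ with hlam
  have hlampos : 0 < lam := by positivity
  set F := fun z => s.sup' hs (fun t => Ψ (a t) z) with hF
  -- exp (lam * F z) = sup' of exp (Ψ (lam • a t) z) ≤ sum
  have hkey : ∀ z, rexp (lam * F z) ≤ ∑ t ∈ s, rexp (Ψ (lam • a t) z) := by
    intro z
    obtain ⟨t, ht, h⟩ := Finset.exists_mem_eq_sup' hs (fun t => Ψ (a t) z)
    show rexp (lam * s.sup' hs (fun t => Ψ (a t) z)) ≤ _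
    rw [h, ← psi_smul]
    exact Finset.single_le_sum (f := fun t => rexp (Ψ (lam • a t) z))
      (fun u _ => (Real.exp_pos _).le) ht
  have hFint : Integrable F (μpi m) := sup_int s hs a
  have hexpint : Integrable (fun z => rexp (lam * F z)) (μpi m) := by
    refine Integrable.mono (integrable_finset_sum s (fun t _ => exp_psi_int (lam • a t)))
      ?_ (Filter.Eventually.of_forall fun z => ?_)
    · exact (Real.measurable_exp.comp_aemeasurable
        (hFint.aestronglyMeasurable.aemeasurable.const_mul lam)).aestronglyMeasurable
    · rw [Real.norm_eq_abs, abs_of_pos (Real.exp_pos _)]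
      refine le_trans (hkey z) (le_abs_self _)
  -- Jensen
  have hjensen : rexp (lam * ∫ z, F z ∂(μpi m)) ≤ ∫ z, rexp (lam * F z) ∂(μpi m) := by
    have := ConvexOn.map_integral_le (μ := μpi m) (f := fun z => lam * F z)
      convexOn_exp Real.continuousOn_exp isClosed_univ
      (Filter.Eventually.of_forall fun _ => Set.mem_univ _) (hFint.const_mul lam)
      (by exact hexpint)
    rwa [integral_const_mul] at this
  -- bound the integral of exp
  have hsum : ∫ z, rexp (lam * F z) ∂(μpi m) ≤ s.card * rexp (lam ^ 2 * σ ^ 2 / 2) := by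
    calc ∫ z, rexp (lam * F z) ∂(μpi m)
        ≤ ∫ z, ∑ t ∈ s, rexp (Ψ (lam • a t) z) ∂(μpi m) :=
          integral_mono hexpint (integrable_finset_sum s fun t _ => exp_psi_int (lam • a t)) hkey
      _ = ∑ t ∈ s, ∫ z, rexp (Ψ (lam • a t) z) ∂(μpi m) :=
          integral_finset_sum s fun t _ => exp_psi_int (lam • a t)
      _ = ∑ t ∈ s, rexp (‖lam • a t‖ ^ 2 / 2) :=
          Finset.sum_congr rfl fun t _ => mgf_psi _
      _ ≤ ∑ t ∈ s, rexp (lam ^ 2 * σ ^ 2 / 2) := by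
          refine Finset.sum_le_sum fun t ht => ?_
          apply Real.exp_le_exp.mpr
          rw [norm_smul, Real.norm_eq_abs, mul_pow, abs_of_pos hlampos]
          have := hb t ht
          have h0 : (0:ℝ) ≤ ‖a t‖ := norm_nonneg _
          gcongr
      _ = s.card * rexp (lam ^ 2 * σ ^ 2 / 2) := by
          rw [Finset.sum_const, nsmul_eq_mul]
  -- conclude
  have hcard : (s.card : ℝ) = rexp L := by
    rw [hLdef, Real.exp_log (by positivity)]
  have hfinal : rexp (lam * ∫ z, F z ∂(μpi m)) ≤ rexp (L + lam ^ 2 * σ ^ 2 / 2) := by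
    calc rexp (lam * ∫ z, F z ∂(μpi m)) ≤ s.card * rexp (lam ^ 2 * σ ^ 2 / 2) :=
        le_trans hjensen hsum
      _ = rexp (L + lam ^ 2 * σ ^ 2 / 2) := by rw [hcard, ← Real.exp_add]
  have hle := Real.exp_le_exp.mp hfinal
  set I := ∫ z, F z ∂(μpi m)
  have hlamval : lam * σ = u := by rw [hlam]; field_simp
  have hlamsq : lam ^ 2 * σ ^ 2 = u ^ 2 := by
    rw [← mul_pow, hlamval]
  rw [hlamsq, hu2] at hle
  -- lam * I ≤ L + (2 L)/2 = 2 L = u ^ 2 ; I ≤ u^2 / lam = u * σ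
  have : lam * I ≤ u ^ 2 := by rw [hu2]; linarith
  calc I = (lam * I) / lam := by field_simp
    _ ≤ u ^ 2 / lam := by gcongr
    _ = σ * u := by rw [hlam]; field_simp

lemma psi_sub (x y : EuclideanSpace ℝ (Fin m)) (z : Fin m → ℝ) :
    Ψ (x - y) z = Ψ x z - Ψ y z := by
  simp [Ψ, sub_mul, Finset.sum_sub_distrib]

end Psi

section Cov
variable {T : Type} [Fintype T] [Nonempty T] {m : ℕ}

noncomputable def covN (a : T → EuclideanSpace ℝ (Fin m)) (r : ℝ) : ℕ :=
  sInf {k : ℕ | ∃ S : Finset T, S.card = k ∧ ∀ t : T, ∃ s ∈ S, ‖a t - a s‖ ≤ r}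

lemma covN_set_nonempty (a : T → EuclideanSpace ℝ (Fin m)) {r : ℝ} (hr : 0 ≤ r) :
    {k : ℕ | ∃ S : Finset T, S.card = k ∧ ∀ t : T, ∃ s ∈ S, ‖a t - a s‖ ≤ r}.Nonempty :=
  ⟨(Finset.univ : Finset T).card, Finset.univ, rfl,
    fun t => ⟨t, Finset.mem_univ t, by simpa using hr⟩⟩

lemma covN_exists (a : T → EuclideanSpace ℝ (Fin m)) {r : ℝ} (hr : 0 ≤ r) :
    ∃ S : Finset T, S.card = covN a r ∧ ∀ t : T, ∃ s ∈ S, ‖a t - a s‖ ≤ r := by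
  have := Nat.sInf_mem (covN_set_nonempty a hr)
  obtain ⟨S, hc, hcov⟩ := this
  exact ⟨S, hc, hcov⟩

lemma covN_pos (a : T → EuclideanSpace ℝ (Fin m)) {r : ℝ} (hr : 0 ≤ r) :
    1 ≤ covN a r := by
  obtain ⟨S, hc, hcov⟩ := covN_exists a hr
  rw [← hc]
  obtain ⟨s, hs, _⟩ := hcov (Classical.arbitrary T)
  exact Finset.card_pos.mpr ⟨s, hs⟩

lemma covN_le_card (a : T → EuclideanSpace ℝ (Fin m)) (r : ℝ) :
    covN a r ≤ Fintype.card T := by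
  by_cases hr : 0 ≤ r
  · exact Nat.sInf_le ⟨Finset.univ, rfl, fun t => ⟨t, Finset.mem_univ t, by simpa using hr⟩⟩
  · rw [covN]
    have : {k : ℕ | ∃ S : Finset T, S.card = k ∧ ∀ t : T, ∃ s ∈ S, ‖a t - a s‖ ≤ r} = ∅ := by
      ext k
      simp only [Set.mem_setOf_eq, Set.mem_empty_iff_false, iff_false]
      rintro ⟨S, _, hcov⟩
      obtain ⟨s, _, hle⟩ := hcov (Classical.arbitrary T)
      exact hr (le_trans (norm_nonneg _) hle)
    rw [this, Nat.sInf_empty]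
    exact Nat.zero_le _

lemma covN_anti (a : T → EuclideanSpace ℝ (Fin m)) {r r' : ℝ} (h0 : 0 ≤ r) (h : r ≤ r') :
    covN a r' ≤ covN a r := by
  obtain ⟨S, hc, hcov⟩ := covN_exists a h0
  rw [← hc]
  exact Nat.sInf_le ⟨S, rfl, fun t => by
    obtain ⟨s, hs, hd⟩ := hcov t; exact ⟨s, hs, hd.trans h⟩⟩

lemma covN_eq_one (a : T → EuclideanSpace ℝ (Fin m)) {r : ℝ} (t₀ : T)
    (h : ∀ t, ‖a t - a t₀‖ ≤ r) : covN a r = 1 := by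
  have h0 : 0 ≤ r := le_trans (norm_nonneg _) (h t₀)
  refine le_antisymm (Nat.sInf_le ⟨{t₀}, Finset.card_singleton t₀,
    fun t => ⟨t₀, Finset.mem_singleton_self t₀, h t⟩⟩) (covN_pos a h0)

end Cov

section Main
variable {T : Type} [Fintype T] [Nonempty T] {m : ℕ}

theorem dudley (a : T → EuclideanSpace ℝ (Fin m)) :
    ∫ z, Finset.univ.sup' Finset.univ_nonempty (fun t => Ψ (a t) z) ∂(μpi m)
      ≤ 12 * ∫ r in Set.Ioi (0 : ℝ), Real.sqrt (Real.log (covN a r)) := by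
  classical
  obtain ⟨t₀⟩ := ‹Nonempty T›
  set D := Finset.univ.sup' Finset.univ_nonempty (fun t => ‖a t - a t₀‖) with hDdef
  have hD0 : 0 ≤ D := le_trans (norm_nonneg _)
    (Finset.le_sup' (fun t => ‖a t - a t₀‖) (Finset.mem_univ t₀))
  have hDle : ∀ t, ‖a t - a t₀‖ ≤ D := fun t =>
    Finset.le_sup' (fun t => ‖a t - a t₀‖) (Finset.mem_univ t)
  -- the modified integrand
  set g : ℝ → ℝ := fun r => Real.sqrt (Real.log (covN a (max r 0))) with hgdef
  have hg_nonneg : ∀ r, 0 ≤ g r := fun r => Real.sqrt_nonneg _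
  have hg_anti : Antitone g := by
    intro r r' hrr'
    apply Real.sqrt_le_sqrt
    apply Real.log_le_log
    · exact_mod_cast covN_pos a (le_max_right r' 0)
    · exact_mod_cast covN_anti a (le_max_right r 0) (max_le_max hrr' le_rfl)
  have hg_meas : Measurable g := hg_anti.measurable
  have hg_bdd : ∀ r, g r ≤ Real.sqrt (Real.log (Fintype.card T)) := by
    intro r
    apply Real.sqrt_le_sqrt
    apply Real.log_le_log
    · exact_mod_cast covN_pos a (le_max_right r 0)
    · exact_mod_cast covN_le_card a _
  have hg_zero : ∀ r, D ≤ r → g r = 0 := by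
    intro r hr
    have : covN a (max r 0) = 1 :=
      covN_eq_one a t₀ (fun t => le_trans (hDle t) (le_max_of_le_left hr))
    simp [hgdef, this]
  have hg_int : IntegrableOn g (Set.Ioi (0 : ℝ)) := by
    have h1 : IntegrableOn g (Set.Ioc (0 : ℝ) D) := by
      refine Integrable.mono' (g := fun _ => Real.sqrt (Real.log (Fintype.card T)))
        ((integrableOn_const_iff (C := Real.sqrt (Real.log (Fintype.card T))) (by finiteness)).mpr (Or.inr ?_)) hg_meas.aestronglyMeasurable
        (Filter.Eventually.of_forall fun r => ?_)
      · rw [Real.volume_Ioc]; exact ENNReal.ofReal_lt_top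
      · rw [Real.norm_eq_abs, abs_of_nonneg (hg_nonneg r)]; exact hg_bdd r
    have h2 : IntegrableOn g (Set.Ioi D) := by
      refine (integrableOn_zero).congr_fun (fun r hr => ?_) measurableSet_Ioi
      exact (hg_zero r (le_of_lt hr)).symm
    have := h1.union h2
    rwa [Set.Ioc_union_Ioi_eq_Ioi hD0] at this
  -- the two integrands agree on `Ioi 0`
  have hg_agree : ∫ r in Set.Ioi (0 : ℝ), Real.sqrt (Real.log (covN a r))
      = ∫ r in Set.Ioi (0 : ℝ), g r := by
    refine setIntegral_congr_fun measurableSet_Ioi (fun r hr => ?_)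
    rw [hgdef]; simp only
    rw [max_eq_left (le_of_lt hr)]
  have hInt_nonneg : 0 ≤ ∫ r in Set.Ioi (0 : ℝ), g r :=
    setIntegral_nonneg measurableSet_Ioi fun r _ => hg_nonneg r
  rcases eq_or_lt_of_le hD0 with hD | hD
  · -- degenerate case : all points coincide
    have hall : ∀ t, a t = a t₀ := by
      intro t
      have := hDle t
      rw [← hD] at this
      exact sub_eq_zero.mp (norm_le_zero_iff.mp this)
    have : (fun z => Finset.univ.sup' Finset.univ_nonempty (fun t => Ψ (a t) z))
        = fun z => Ψ (a t₀) z := by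
      funext z
      refine le_antisymm (Finset.sup'_le _ _ fun t _ => le_of_eq (by rw [hall t]))
        (Finset.le_sup' (fun t => Ψ (a t) z) (Finset.mem_univ t₀))
    rw [this, psi_mean_zero, hg_agree]
    positivity
  -- main case : D > 0
  set ε : ℕ → ℝ := fun j => D / 2 ^ j with hεdef
  have hεpos : ∀ j, 0 < ε j := fun j => by positivity
  have hεsucc : ∀ j, ε (j + 1) = ε j / 2 := by
    intro j; rw [hεdef]; simp only; rw [pow_succ]; ring
  have hεanti : ∀ {i j : ℕ}, i ≤ j → ε j ≤ ε i := by
    intro i j hij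
    apply div_le_div_of_nonneg_left hD.le (by positivity)
    exact pow_le_pow_right₀ one_le_two hij
  -- nets
  have hSex : ∀ j : ℕ, ∃ S : Finset T, S.card = covN a (ε j) ∧
      ∀ t : T, ∃ s ∈ S, ‖a t - a s‖ ≤ ε j := fun j => covN_exists a (hεpos j).le
  choose S hScard hScov using hSex
  choose pj hpjmem hpjdist using hScov
  -- minimal positive distance
  set P : Finset (T × T) := Finset.univ.filter (fun p : T × T => a p.1 ≠ a p.2) with hPdef
  have hPne : P.Nonempty := by
    obtain ⟨t, _, ht⟩ := Finset.exists_mem_eq_sup' Finset.univ_nonempty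
      (fun t => ‖a t - a t₀‖)
    refine ⟨(t, t₀), Finset.mem_filter.mpr ⟨Finset.mem_univ _, ?_⟩⟩
    intro hcontra
    rw [← hDdef] at ht
    rw [ht, hcontra, sub_self, norm_zero] at hD
    exact lt_irrefl _ hD
  set δ : ℝ := P.inf' hPne (fun p => ‖a p.1 - a p.2‖) with hδdef
  have hδpos : 0 < δ := by
    rw [hδdef, Finset.lt_inf'_iff]
    intro p hp
    have : a p.1 ≠ a p.2 := (Finset.mem_filter.mp hp).2
    exact norm_pos_iff.mpr (sub_ne_zero.mpr this)
  have hclose : ∀ t s : T, ‖a t - a s‖ < δ → a t = a s := by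
    intro t s h
    by_contra hne
    have hmem : (t, s) ∈ P := Finset.mem_filter.mpr ⟨Finset.mem_univ _, hne⟩
    have hle := Finset.inf'_le (fun p => ‖a p.1 - a p.2‖) hmem
    rw [← hδdef] at hle
    exact absurd hle (not_le.mpr h)
  -- choose the depth J
  obtain ⟨J, hJ⟩ : ∃ J : ℕ, ε J < δ := by
    obtain ⟨n, hn⟩ := pow_unbounded_of_one_lt (D / δ) (y := (2 : ℝ)) one_lt_two
    refine ⟨n, ?_⟩
    rw [hεdef]
    simp only
    rw [div_lt_iff₀ (by positivity : (0:ℝ) < 2 ^ n)]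
    calc D = (D / δ) * δ := by field_simp
      _ < 2 ^ n * δ := mul_lt_mul_of_pos_right hn hδpos
      _ = δ * 2 ^ n := mul_comm _ _
  have hend : ∀ t, a (pj J t) = a t := by
    intro t
    exact (hclose t (pj J t) (lt_of_le_of_lt (hpjdist J t) hJ)).symm
  -- pj 0 is constant
  have hS0card : (S 0).card = 1 := by
    rw [hScard 0]
    exact covN_eq_one a t₀ (fun t => by
      refine le_trans (hDle t) ?_
      rw [hεdef]; simp)
  obtain ⟨s₀, hs₀⟩ := Finset.card_eq_one.mp hS0card
  have hpj0 : ∀ t, pj 0 t = s₀ := by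
    intro t
    have := hpjmem 0 t
    rw [hs₀] at this
    exact Finset.mem_singleton.mp this
  -- pair sets
  set Q : ℕ → Finset (T × T) :=
    fun k => Finset.image (fun t => (pj (k + 1) t, pj k t)) Finset.univ with hQdef
  have hQne : ∀ k, (Q k).Nonempty :=
    fun k => Finset.Nonempty.image Finset.univ_nonempty _
  have hQdist : ∀ k, ∀ p ∈ Q k, ‖a p.1 - a p.2‖ ≤ 3 * ε (k + 1) := by
    intro k p hp
    obtain ⟨t, _, rfl⟩ := Finset.mem_image.mp hp
    calc ‖a (pj (k + 1) t) - a (pj k t)‖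
        ≤ ‖a (pj (k + 1) t) - a t‖ + ‖a t - a (pj k t)‖ :=
          norm_sub_le_norm_sub_add_norm_sub _ _ _
      _ ≤ ε (k + 1) + ε k := by
          gcongr
          · rw [norm_sub_rev]; exact hpjdist (k + 1) t
          · exact hpjdist k t
      _ = 3 * ε (k + 1) := by rw [hεsucc k]; ring
  have hQcard : ∀ k, (Q k).card ≤ covN a (ε (k + 1)) ^ 2 := by
    intro k
    have hsub : Q k ⊆ S (k + 1) ×ˢ S k := by
      intro p hp
      obtain ⟨t, _, rfl⟩ := Finset.mem_image.mp hp
      exact Finset.mem_product.mpr ⟨hpjmem (k + 1) t, hpjmem k t⟩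
    calc (Q k).card ≤ (S (k + 1) ×ˢ S k).card := Finset.card_le_card hsub
      _ = covN a (ε (k + 1)) * covN a (ε k) := by
          rw [Finset.card_product, hScard, hScard]
      _ ≤ covN a (ε (k + 1)) * covN a (ε (k + 1)) := by
          gcongr
          exact covN_anti a (hεpos (k + 1)).le (hεanti (Nat.le_succ k))
      _ = covN a (ε (k + 1)) ^ 2 := (sq _).symm
  -- pointwise chaining
  have hchain : ∀ z, Finset.univ.sup' Finset.univ_nonempty (fun t => Ψ (a t) z)
      ≤ Ψ (a s₀) z + ∑ k ∈ Finset.range J,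
        (Q k).sup' (hQne k) (fun p => Ψ (a p.1 - a p.2) z) := by
    intro z
    apply Finset.sup'_le
    intro t _
    have htel : Ψ (a t) z = Ψ (a s₀) z
        + ∑ k ∈ Finset.range J, Ψ (a (pj (k + 1) t) - a (pj k t)) z := by
      have h1 : ∀ k, Ψ (a (pj (k + 1) t) - a (pj k t)) z
          = Ψ (a (pj (k + 1) t)) z - Ψ (a (pj k t)) z := fun k => psi_sub _ _ _
      simp_rw [h1]
      rw [Finset.sum_range_sub (fun k => Ψ (a (pj k t)) z), hpj0 t]
      have := hend t
      rw [this]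
      ring
    rw [htel]
    gcongr with k hk
    have hmem : (pj (k + 1) t, pj k t) ∈ Q k := by
      rw [hQdef]
      exact Finset.mem_image_of_mem _ (Finset.mem_univ t)
    exact Finset.le_sup' (f := fun p : T × T => Ψ (a p.1 - a p.2) z) hmem
  -- integrate the chain
  have hIntSup : ∀ k, Integrable
      (fun z => (Q k).sup' (hQne k) (fun p => Ψ (a p.1 - a p.2) z)) (μpi m) :=
    fun k => sup_int (Q k) (hQne k) (fun p => a p.1 - a p.2)
  have hIntRHS : Integrable (fun z => Ψ (a s₀) z + ∑ k ∈ Finset.range J,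
      (Q k).sup' (hQne k) (fun p => Ψ (a p.1 - a p.2) z)) (μpi m) :=
    (psi_int (a s₀)).add (integrable_finset_sum _ fun k _ => hIntSup k)
  have hstep1 : ∫ z, Finset.univ.sup' Finset.univ_nonempty (fun t => Ψ (a t) z) ∂(μpi m)
      ≤ ∑ k ∈ Finset.range J,
        ∫ z, (Q k).sup' (hQne k) (fun p => Ψ (a p.1 - a p.2) z) ∂(μpi m) := by
    calc ∫ z, Finset.univ.sup' Finset.univ_nonempty (fun t => Ψ (a t) z) ∂(μpi m)
        ≤ ∫ z, (Ψ (a s₀) z + ∑ k ∈ Finset.range J,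
            (Q k).sup' (hQne k) (fun p => Ψ (a p.1 - a p.2) z)) ∂(μpi m) :=
          integral_mono (sup_int Finset.univ Finset.univ_nonempty a) hIntRHS hchain
      _ = (∫ z, Ψ (a s₀) z ∂(μpi m)) + ∫ z, (∑ k ∈ Finset.range J,
            (Q k).sup' (hQne k) (fun p => Ψ (a p.1 - a p.2) z)) ∂(μpi m) :=
          integral_add (psi_int (a s₀)) (integrable_finset_sum _ fun k _ => hIntSup k)
      _ = ∑ k ∈ Finset.range J,
            ∫ z, (Q k).sup' (hQne k) (fun p => Ψ (a p.1 - a p.2) z) ∂(μpi m) := by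
          rw [psi_mean_zero, zero_add, integral_finset_sum _ fun k _ => hIntSup k]
  -- bound each level
  have hlevel : ∀ k, ∫ z, (Q k).sup' (hQne k) (fun p => Ψ (a p.1 - a p.2) z) ∂(μpi m)
      ≤ 6 * ε (k + 1) * Real.sqrt (Real.log (covN a (ε (k + 1)))) := by
    intro k
    have hmax := gaussian_max (T × T) (Q k) (hQne k) (fun p => a p.1 - a p.2)
      (3 * ε (k + 1)) (by positivity) (hQdist k)
    refine hmax.trans ?_
    have hN1 : (1 : ℝ) ≤ (covN a (ε (k + 1)) : ℝ) :=
      Nat.one_le_cast.mpr (covN_pos a (hεpos (k + 1)).le)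
    have hlog1 : Real.log ((Q k).card) ≤ 2 * Real.log (covN a (ε (k + 1))) := by
      calc Real.log ((Q k).card) ≤ Real.log ((covN a (ε (k + 1)) : ℝ) ^ 2) := by
            apply Real.log_le_log
            · exact_mod_cast (hQne k).card_pos
            · exact_mod_cast hQcard k
        _ = 2 * Real.log (covN a (ε (k + 1))) := by
            rw [Real.log_pow]; push_cast; ring
    have hlogN : 0 ≤ Real.log (covN a (ε (k + 1))) :=
      Real.log_nonneg hN1
    calc 3 * ε (k + 1) * Real.sqrt (2 * Real.log ((Q k).card))
        ≤ 3 * ε (k + 1) * Real.sqrt (4 * Real.log (covN a (ε (k + 1)))) := by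
          refine mul_le_mul_of_nonneg_left (Real.sqrt_le_sqrt (by linarith)) (by positivity)
      _ = 6 * ε (k + 1) * Real.sqrt (Real.log (covN a (ε (k + 1)))) := by
          rw [show (4 : ℝ) * Real.log (covN a (ε (k + 1)))
              = 2 ^ 2 * Real.log (covN a (ε (k + 1))) by norm_num,
            Real.sqrt_mul (by positivity), Real.sqrt_sq (by norm_num : (0:ℝ) ≤ 2)]
          ring
  -- bound each level term by an integral of g
  have hinterval : ∀ k, 6 * ε (k + 1) * Real.sqrt (Real.log (covN a (ε (k + 1))))
      ≤ 12 * ∫ r in Set.Ioc (ε (k + 2)) (ε (k + 1)), g r := by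
    intro k
    have hlow := setIntegral_ge_of_const_le (μ := volume) (c := g (ε (k + 1)))
      (f := g) measurableSet_Ioc (by rw [Real.volume_Ioc]; exact ENNReal.ofReal_ne_top)
      (fun r hr => hg_anti hr.2)
      (hg_int.mono_set (fun r hr => (hεpos (k + 2)).trans hr.1))
    have hvol : (volume (Set.Ioc (ε (k + 2)) (ε (k + 1)))).toReal = ε (k + 2) := by
      rw [Real.volume_Ioc, ENNReal.toReal_ofReal
        (by linarith [hεanti (by omega : k + 1 ≤ k + 2)])]
      rw [hεsucc (k + 1)]; ring
    have hgval : g (ε (k + 1)) = Real.sqrt (Real.log (covN a (ε (k + 1)))) := by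
      rw [hgdef]; simp only
      rw [max_eq_left (hεpos (k + 1)).le]
    rw [measureReal_def, hvol, hgval, smul_eq_mul] at hlow
    have h2 : ε (k + 2) = ε (k + 1) / 2 := hεsucc (k + 1)
    nlinarith [Real.sqrt_nonneg (Real.log (covN a (ε (k + 1)))), hεpos (k + 1)]
  -- sum of interval integrals
  have hsumint : ∀ n : ℕ, ∑ k ∈ Finset.range n, ∫ r in Set.Ioc (ε (k + 2)) (ε (k + 1)), g r
      = ∫ r in Set.Ioc (ε (n + 1)) (ε 1), g r := by
    intro n
    induction n with
    | zero => simp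
    | succ n ih =>
        have h1 : ε (n + 2) ≤ ε (n + 1) := hεanti (by omega)
        have h2 : ε (n + 1) ≤ ε 1 := hεanti (by omega)
        have hA : IntegrableOn g (Set.Ioc (ε (n + 2)) (ε (n + 1))) :=
          hg_int.mono_set (fun r hr => (hεpos (n + 2)).trans hr.1)
        have hB : IntegrableOn g (Set.Ioc (ε (n + 1)) (ε 1)) :=
          hg_int.mono_set (fun r hr => (hεpos (n + 1)).trans hr.1)
        have hu := setIntegral_union (μ := volume) (f := g) (Set.Ioc_disjoint_Ioc_of_le le_rfl)
          measurableSet_Ioc hA hB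
        rw [Set.Ioc_union_Ioc_eq_Ioc h1 h2] at hu
        rw [Finset.sum_range_succ, ih, add_comm, ← hu]
  have htot : ∑ k ∈ Finset.range J, ∫ r in Set.Ioc (ε (k + 2)) (ε (k + 1)), g r
      ≤ ∫ r in Set.Ioi (0 : ℝ), g r := by
    rw [hsumint J]
    refine setIntegral_mono_set hg_int
      (Filter.Eventually.of_forall fun r => hg_nonneg r)
      (Filter.Eventually.of_forall fun r hr => (hεpos (J + 1)).trans hr.1)
  -- final assembly
  rw [hg_agree]
  calc ∫ z, Finset.univ.sup' Finset.univ_nonempty (fun t => Ψ (a t) z) ∂(μpi m)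
      ≤ ∑ k ∈ Finset.range J,
          ∫ z, (Q k).sup' (hQne k) (fun p => Ψ (a p.1 - a p.2) z) ∂(μpi m) := hstep1
    _ ≤ ∑ k ∈ Finset.range J,
          (12 * ∫ r in Set.Ioc (ε (k + 2)) (ε (k + 1)), g r) :=
        Finset.sum_le_sum fun k _ => (hlevel k).trans (hinterval k)
    _ = 12 * ∑ k ∈ Finset.range J, ∫ r in Set.Ioc (ε (k + 2)) (ε (k + 1)), g r := by
        rw [Finset.mul_sum]
    _ ≤ 12 * ∫ r in Set.Ioi (0 : ℝ), g r := by linarith [htot]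


end Main

/-- Dudley's metric-entropy bound for finite centered Gaussian
families `Ψ_t = ⟨a_t, X⟩`, `X` standard Gaussian in `ℝ^m`: there is a universal
constant `C > 0` such that
`E[max_t Ψ_t] ≤ C ∫₀^∞ √(log N(r)) dr`,
where `N(r)` is the covering number of the index set under the canonical
pseudometric `ρ(s,t) = ‖a_s − a_t‖₂`. -/
theorem stmt9 :
    ∃ C : ℝ, 0 < C ∧
      ∀ (T : Type) (_ : Fintype T) (_ : Nonempty T)
        (m : ℕ) (a : T → EuclideanSpace ℝ (Fin m)),
        (∫ z : Fin m → ℝ,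
            ⨆ t : T, (inner ℝ (a t) ((WithLp.equiv 2 (Fin m → ℝ)).symm z) : ℝ)
            ∂(Measure.pi fun _ => gaussianReal 0 1))
          ≤ C * ∫ r in Set.Ioi (0 : ℝ),
              Real.sqrt (Real.log
                ((sInf {k : ℕ | ∃ S : Finset T,
                  S.card = k ∧ ∀ t : T, ∃ s ∈ S, ‖a t - a s‖ ≤ r} : ℕ) : ℝ)) := by
  refine ⟨12, by norm_num, ?_⟩
  intro T instF instN m a
  have hfun : ∀ z : Fin m → ℝ,
      (⨆ t : T, (inner ℝ (a t) ((WithLp.equiv 2 (Fin m → ℝ)).symm z) : ℝ))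
        = Finset.univ.sup' Finset.univ_nonempty (fun t => Ψ (a t) z) := by
    intro z
    have h1 : ∀ t, (inner ℝ (a t) ((WithLp.equiv 2 (Fin m → ℝ)).symm z) : ℝ) = Ψ (a t) z := by
      intro t
      rw [Ψ, PiLp.inner_apply]
      simp [RCLike.inner_apply, mul_comm]
    simp_rw [h1]
    apply le_antisymm
    · exact ciSup_le fun t => Finset.le_sup' (fun t => Ψ (a t) z) (Finset.mem_univ t)
    · exact Finset.sup'_le _ _ fun t _ =>
        le_ciSup (f := fun t => Ψ (a t) z) (Finite.bddAbove_range _) t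
  calc (∫ z : Fin m → ℝ,
          ⨆ t : T, (inner ℝ (a t) ((WithLp.equiv 2 (Fin m → ℝ)).symm z) : ℝ)
          ∂(Measure.pi fun _ => gaussianReal 0 1))
      = ∫ z, Finset.univ.sup' Finset.univ_nonempty (fun t => Ψ (a t) z) ∂(μpi m) := by
        apply integral_congr_ae
        exact Filter.Eventually.of_forall fun z => hfun z
    _ ≤ 12 * ∫ r in Set.Ioi (0 : ℝ), Real.sqrt (Real.log (covN a r)) := dudley a
    _ = 12 * ∫ r in Set.Ioi (0 : ℝ),
          Real.sqrt (Real.log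
            ((sInf {k : ℕ | ∃ S : Finset T,
              S.card = k ∧ ∀ t : T, ∃ s ∈ S, ‖a t - a s‖ ≤ r} : ℕ) : ℝ)) := rfl
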